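/- arXiv:2410.21124 — 3 statements merged into one kernel-verified Lean document; each statement's English description precedes it below -/
import Mathlib

section
/- Let J be the Choi matrix of a quantum channel from a finite-dimensional system A to a finite-dimensional system B, and let M ≥ 1 be a real number. Then suc^NS(J, M) ≥ (1 − 1/M)·suc^MC(J, M). -/
open Matrix Kronecker Filter ComplexOrder

namespace QCoding

/-- Partial trace over the first tensor factor. -/
noncomputable def trFst {R B : Type*} [Fintype R]
    (Λ : Matrix (R × B) (R × B) ℂ) : Matrix B B ℂ :=
  fun b b' => ∑ r, Λ (r, b) (r, b')

/-- Partial trace over the second tensor factor. -/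
noncomputable def trSnd {R B : Type*} [Fintype B]
    (Λ : Matrix (R × B) (R × B) ℂ) : Matrix R R ℂ :=
  fun r r' => ∑ b, Λ (r, b) (r', b)

/-- A quantum state: positive semidefinite with unit trace. -/
def IsState {n : Type*} [Fintype n] (ρ : Matrix n n ℂ) : Prop :=
  ρ.PosSemidef ∧ ρ.trace = 1

/-- A Choi matrix of a quantum channel: positive semidefinite with
partial trace over the output system equal to the identity. -/
def IsChoi {A B : Type*} [Fintype A] [Fintype B] [DecidableEq A]
    (J : Matrix (A × B) (A × B) ℂ) : Prop :=
  J.PosSemidef ∧ trSnd J = 1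

/-- The non-signaling success probability: supremum of `(1/M) Tr[Λ J]` over states `ρ`
and `Λ` with `0 ≼ Λ ≼ M (ρ ⊗ I_B)` and `Tr_R Λ = I_B`. -/
noncomputable def sucNS {A B : Type*} [Fintype A] [Fintype B] [DecidableEq B]
    (J : Matrix (A × B) (A × B) ℂ) (M : ℝ) : ℝ :=
  sSup {x | ∃ ρ : Matrix A A ℂ, ∃ Λ : Matrix (A × B) (A × B) ℂ,
    IsState ρ ∧ Λ.PosSemidef ∧
    ((M : ℂ) • (ρ ⊗ₖ (1 : Matrix B B ℂ)) - Λ).PosSemidef ∧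
    trFst Λ = 1 ∧ x = (1 / M) * (Λ * J).trace.re}

/-- The meta-converse success probability: as `sucNS` but with `Tr_R Λ ≼ I_B`. -/
noncomputable def sucMC {A B : Type*} [Fintype A] [Fintype B] [DecidableEq B]
    (J : Matrix (A × B) (A × B) ℂ) (M : ℝ) : ℝ :=
  sSup {x | ∃ ρ : Matrix A A ℂ, ∃ Λ : Matrix (A × B) (A × B) ℂ,
    IsState ρ ∧ Λ.PosSemidef ∧
    ((M : ℂ) • (ρ ⊗ₖ (1 : Matrix B B ℂ)) - Λ).PosSemidef ∧
    ((1 : Matrix B B ℂ) - trFst Λ).PosSemidef ∧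
    x = (1 / M) * (Λ * J).trace.re}

/-- The fixed-input non-signaling success probability: supremum of `Tr[Λ J]` over `Λ`
with `0 ≼ Λ ≼ ρ ⊗ I_B` and `Tr_R Λ = (1/M) I_B`. -/
noncomputable def sucNSFixed {A B : Type*} [Fintype A] [Fintype B] [DecidableEq B]
    (J : Matrix (A × B) (A × B) ℂ) (M : ℝ) (ρ : Matrix A A ℂ) : ℝ :=
  sSup {x | ∃ Λ : Matrix (A × B) (A × B) ℂ, Λ.PosSemidef ∧
    ((ρ ⊗ₖ (1 : Matrix B B ℂ)) - Λ).PosSemidef ∧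
    trFst Λ = ((1 / M : ℂ)) • (1 : Matrix B B ℂ) ∧
    x = (Λ * J).trace.re}

/-- Apply a real function spectrally to a Hermitian matrix (junk value `0` otherwise). -/
noncomputable def hermApply {n : Type*} [Fintype n] [DecidableEq n]
    (H : Matrix n n ℂ) (f : ℝ → ℝ) : Matrix n n ℂ :=
  if h : H.IsHermitian then
    (h.eigenvectorUnitary : Matrix n n ℂ) *
      Matrix.diagonal (fun i => (f (h.eigenvalues i) : ℂ)) *
      (star (h.eigenvectorUnitary : Matrix n n ℂ))
  else 0

/-- Real (spectral) power of a positive semidefinite matrix, with the Moore-Penrose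
convention: for `p ≠ 0` the eigenvalue `0` is mapped to `(0:ℝ) ^ p = 0`.
In particular `matRPow ρ (1/2)` is the positive semidefinite square root of `ρ` and
`matRPow ρ (-(1/2))` is the Moore-Penrose pseudo-inverse of that square root. -/
noncomputable def matRPow {n : Type*} [Fintype n] [DecidableEq n]
    (H : Matrix n n ℂ) (p : ℝ) : Matrix n n ℂ :=
  hermApply H (fun x => x ^ p)

/-- Positive part of a Hermitian matrix: each eigenvalue `λ` is replaced by `max λ 0`. -/
noncomputable def posPart {n : Type*} [Fintype n] [DecidableEq n]
    (H : Matrix n n ℂ) : Matrix n n ℂ :=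
  hermApply H (fun x => max x 0)

/-- Support inclusion for positive semidefinite matrices: the kernel of `σ` is
contained in the kernel of `ρ`, i.e. the support of `ρ` is contained in that of `σ`. -/
def SuppLe {n : Type*} [Fintype n] (ρ σ : Matrix n n ℂ) : Prop :=
  ∀ v : n → ℂ, σ.mulVec v = 0 → ρ.mulVec v = 0

/-- The sandwiched Rényi divergence of order `α` (finite-value formula, meaningful when
the support of `ρ` is contained in that of `σ`). -/
noncomputable def sandDiv {n : Type*} [Fintype n] [DecidableEq n]
    (α : ℝ) (ρ σ : Matrix n n ℂ) : ℝ :=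
  (α - 1)⁻¹ * Real.log
    ((matRPow (matRPow σ ((1 - α) / (2 * α)) * ρ * matRPow σ ((1 - α) / (2 * α))) α).trace.re)

/-- The channel's sandwiched Rényi mutual information of order `α`:
`sup_ρ inf_σ D̃_α((ρ^{1/2} ⊗ I_B) J (ρ^{1/2} ⊗ I_B) ‖ ρ ⊗ σ)`, the infimum being
restricted to those `σ` for which the support condition holds (the divergence is `+∞`
otherwise, so such `σ` never contribute to the infimum). -/
noncomputable def sandMI {A B : Type*} [Fintype A] [Fintype B] [DecidableEq A] [DecidableEq B]
    (α : ℝ) (J : Matrix (A × B) (A × B) ℂ) : ℝ :=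
  sSup {x | ∃ ρ : Matrix A A ℂ, IsState ρ ∧
    x = sInf {y | ∃ σ : Matrix B B ℂ, IsState σ ∧
      SuppLe ((matRPow ρ (1/2) ⊗ₖ (1 : Matrix B B ℂ)) * J *
          (matRPow ρ (1/2) ⊗ₖ (1 : Matrix B B ℂ))) (ρ ⊗ₖ σ) ∧
      y = sandDiv α ((matRPow ρ (1/2) ⊗ₖ (1 : Matrix B B ℂ)) * J *
          (matRPow ρ (1/2) ⊗ₖ (1 : Matrix B B ℂ))) (ρ ⊗ₖ σ)}}

/-- Choi matrix of the `n`-fold tensor power channel. -/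
noncomputable def choiPow {A B : Type*} (J : Matrix (A × B) (A × B) ℂ) (n : ℕ) :
    Matrix ((Fin n → A) × (Fin n → B)) ((Fin n → A) × (Fin n → B)) ℂ :=
  fun p q => ∏ k : Fin n, J (p.1 k, p.2 k) (q.1 k, q.2 k)

/-- Action of the channel with Choi matrix `C` (from `S` to `T`) on the first tensor
factor of a bipartite matrix on `S × E`. -/
noncomputable def chanApply {S T E : Type*} [Fintype S]
    (C : Matrix (S × T) (S × T) ℂ) (X : Matrix (S × E) (S × E) ℂ) :
    Matrix (T × E) (T × E) ℂ :=
  fun p q => ∑ s : S, ∑ s' : S, C (s, p.1) (s', q.1) * X (s, p.2) (s', q.2)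

/-- The entanglement-assisted success probability for `M` messages: supremum over a
shared pure entangled state `ψ` on `Fin d × Fin d`, encoding channels `K m` from `E_A`
to `A` (Choi matrices), and a POVM `Ξ` on `B × E_B`, of the average probability of
correct decoding. -/
noncomputable def sucEA {A B : Type*} [Fintype A] [Fintype B] [DecidableEq B]
    (J : Matrix (A × B) (A × B) ℂ) (M : ℕ) : ℝ :=
  sSup {x | ∃ d : ℕ, 1 ≤ d ∧
    ∃ ψ : Fin d × Fin d → ℂ, (∑ i, Complex.normSq (ψ i)) = 1 ∧
    ∃ K : Fin M → Matrix (Fin d × A) (Fin d × A) ℂ,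
      (∀ m, (K m).PosSemidef ∧ trSnd (K m) = 1) ∧
    ∃ Ξ : Fin M → Matrix (B × Fin d) (B × Fin d) ℂ,
      (∀ m, (Ξ m).PosSemidef) ∧ (∑ m, Ξ m) = 1 ∧
      x = (1 / (M : ℝ)) *
        ∑ m, ((Ξ m) * chanApply J (chanApply (K m) (Matrix.vecMulVec ψ (star ψ)))).trace.re}

/- ### auxiliary lemmas -/

lemma psd_trace_nonneg {n : Type*} [Fintype n] [DecidableEq n] {M : Matrix n n ℂ}
    (h : M.PosSemidef) : 0 ≤ M.trace := by
  refine Finset.sum_nonneg fun i _ => ?_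
  simpa [dotProduct, Matrix.mulVec_single, Pi.single_apply] using h.dotProduct_mulVec_nonneg (Pi.single i 1)

lemma trace_mul_psd_nonneg {n : Type*} [Fintype n] [DecidableEq n] {P Q : Matrix n n ℂ}
    (hP : P.PosSemidef) (hQ : Q.PosSemidef) : 0 ≤ ((P * Q).trace) := by
  obtain ⟨S, hSpsd, hS⟩ : ∃ S : Matrix n n ℂ, S.PosSemidef ∧ P = S * S := by
    open scoped MatrixOrder in
    exact ⟨CFC.sqrt P, (CFC.sqrt_nonneg P).posSemidef, (CFC.sqrt_mul_sqrt_self P hP.nonneg).symm⟩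
  have h1 : P * Q = S * (S * Q) := by
    rw [← Matrix.mul_assoc, ← hS]
  have h2 : (P * Q).trace = (S * Q * S).trace := by
    rw [h1, Matrix.trace_mul_comm, Matrix.mul_assoc]
  rw [h2]
  have hpsd : (S * Q * Sᴴ).PosSemidef := hQ.mul_mul_conjTranspose_same _
  rw [hSpsd.isHermitian] at hpsd
  exact psd_trace_nonneg hpsd

lemma smul_psd {n : Type*} [Fintype n] {M : Matrix n n ℂ} (h : M.PosSemidef)
    {r : ℝ} (hr : 0 ≤ r) : ((r : ℂ) • M).PosSemidef := by
  refine Matrix.PosSemidef.of_dotProduct_mulVec_nonneg ?_ ?_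
  · unfold Matrix.IsHermitian
    rw [Matrix.conjTranspose_smul, h.1]
    congr 1
    simp
  · intro x
    rw [Matrix.smul_mulVec, dotProduct_smul, smul_eq_mul]
    exact mul_nonneg (by exact_mod_cast Complex.zero_le_real.mpr hr) (h.dotProduct_mulVec_nonneg x)

lemma one_kron_psd {A B : Type*} [Fintype A] [Fintype B] [DecidableEq A]
    {X : Matrix B B ℂ} (hX : X.PosSemidef) :
    ((1 : Matrix A A ℂ) ⊗ₖ X).PosSemidef := by
  refine Matrix.PosSemidef.of_dotProduct_mulVec_nonneg ?_ ?_
  · ext ⟨a, b⟩ ⟨a', b'⟩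
    simp only [Matrix.conjTranspose_apply, Matrix.kroneckerMap_apply, Matrix.one_apply,
      star_mul', hX.1.apply]
    by_cases h : a = a' <;> simp [h, eq_comm]
  · intro x
    have key : star x ⬝ᵥ ((1 : Matrix A A ℂ) ⊗ₖ X) *ᵥ x
        = ∑ a : A, star (fun b => x (a, b)) ⬝ᵥ X *ᵥ (fun b => x (a, b)) := by
      simp only [dotProduct, Matrix.mulVec, Matrix.kroneckerMap_apply, Matrix.one_apply,
        Fintype.sum_prod_type, Pi.star_apply, ite_mul, one_mul, zero_mul]
      refine Finset.sum_congr rfl fun a _ => Finset.sum_congr rfl fun b _ => ?_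
      congr 1
      rw [Finset.sum_comm]
      simp
    rw [key]
    exact Finset.sum_nonneg fun a _ => hX.dotProduct_mulVec_nonneg _

lemma trFst_psd {A B : Type*} [Fintype A] [Fintype B] [DecidableEq A]
    {Λ : Matrix (A × B) (A × B) ℂ} (h : Λ.PosSemidef) : (trFst Λ).PosSemidef := by
  refine Matrix.PosSemidef.of_dotProduct_mulVec_nonneg ?_ ?_
  · ext b b'
    simp only [trFst, Matrix.conjTranspose_apply, star_sum]
    refine Finset.sum_congr rfl fun r _ => ?_
    rw [← Matrix.conjTranspose_apply, h.1]
  · intro v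
    have inner : ∀ r : A, star (fun p : A × B => if p.1 = r then v p.2 else 0) ⬝ᵥ
        Λ *ᵥ (fun p : A × B => if p.1 = r then v p.2 else 0)
        = ∑ b, star (v b) * ∑ b', Λ (r, b) (r, b') * v b' := by
      intro r
      simp only [dotProduct, Matrix.mulVec, Pi.star_apply, Fintype.sum_prod_type,
        apply_ite star, star_zero, ite_mul, zero_mul, mul_ite, mul_zero,
        Finset.sum_ite_irrel, Finset.sum_const_zero, Finset.sum_ite_eq, Finset.sum_ite_eq',
        Finset.mem_univ, if_true]
    have key : star v ⬝ᵥ (trFst Λ) *ᵥ v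
        = ∑ r : A, star (fun p : A × B => if p.1 = r then v p.2 else 0) ⬝ᵥ
            Λ *ᵥ (fun p : A × B => if p.1 = r then v p.2 else 0) := by
      simp only [inner]
      have lhs : star v ⬝ᵥ (trFst Λ) *ᵥ v
          = ∑ b, star (v b) * ∑ r, ∑ b', Λ (r, b) (r, b') * v b' := by
        simp only [dotProduct, Matrix.mulVec, trFst, Pi.star_apply, Finset.sum_mul]
        exact Finset.sum_congr rfl fun b _ => by rw [Finset.sum_comm]
      rw [lhs, Finset.sum_comm]
      exact Finset.sum_congr rfl fun r _ => by rw [Finset.mul_sum]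
    rw [key]
    exact Finset.sum_nonneg fun r _ => h.dotProduct_mulVec_nonneg _

lemma re_nonneg_of_nonneg {z : ℂ} (h : 0 ≤ z) : 0 ≤ z.re := by
  have := (Complex.le_def.mp h).1
  simpa using this

lemma trFst_add {A B : Type*} [Fintype A] (X Y : Matrix (A × B) (A × B) ℂ) :
    trFst (X + Y) = trFst X + trFst Y := by
  ext b b'
  simp [trFst, Finset.sum_add_distrib]

lemma trFst_smul {A B : Type*} [Fintype A] (c : ℂ) (X : Matrix (A × B) (A × B) ℂ) :
    trFst (c • X) = c • trFst X := by
  ext b b'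
  simp [trFst, Finset.mul_sum]

lemma trFst_one_kron {A B : Type*} [Fintype A] [Fintype B] [DecidableEq A]
    (D : Matrix B B ℂ) :
    trFst ((1 : Matrix A A ℂ) ⊗ₖ D) = (Fintype.card A : ℂ) • D := by
  ext b b'
  simp [trFst, Matrix.one_apply]

lemma kron_one_mul_trace {A B : Type*} [Fintype A] [Fintype B] [DecidableEq A] [DecidableEq B]
    (ρ : Matrix A A ℂ) {J : Matrix (A × B) (A × B) ℂ} (hJ : trSnd J = 1) :
    ((ρ ⊗ₖ (1 : Matrix B B ℂ)) * J).trace = ρ.trace := by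
  have h1 : ∀ a a', (∑ b, J (a', b) (a, b)) = (1 : Matrix A A ℂ) a' a := by
    intro a a'
    rw [← hJ]; rfl
  calc ((ρ ⊗ₖ (1 : Matrix B B ℂ)) * J).trace
      = ∑ a, ∑ a', ρ a a' * ∑ b, J (a', b) (a, b) := by
        simp only [Matrix.trace, Matrix.diag, Matrix.mul_apply, Matrix.kroneckerMap_apply,
          Matrix.one_apply, Fintype.sum_prod_type, ite_mul, zero_mul, mul_ite, mul_zero,
          Finset.sum_ite_irrel, Finset.sum_const_zero, Finset.sum_ite_eq, Finset.sum_ite_eq',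
          Finset.mem_univ, if_true, Finset.mul_sum]
        simp only [mul_one]
        exact Finset.sum_congr rfl fun a _ => Finset.sum_comm
    _ = ρ.trace := by
        simp only [h1, Matrix.one_apply, mul_ite, mul_one, mul_zero]
        simp [Matrix.trace, Matrix.diag, Finset.sum_ite_eq, Finset.sum_ite_eq']

/-- For a Choi matrix `J` and `M ≥ 1`,
`suc^NS(J, M) ≥ (1 − 1/M) · suc^MC(J, M)`. -/
theorem sucNS_ge_sucMC {A B : Type*} [Fintype A] [DecidableEq A] [Nonempty A]
    [Fintype B] [DecidableEq B]
    (J : Matrix (A × B) (A × B) ℂ) (hJ : IsChoi J)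
    (M : ℝ) (hM : 1 ≤ M) :
    (1 - 1 / M) * sucMC J M ≤ sucNS J M := by
  have hM0 : (0 : ℝ) < M := lt_of_lt_of_le one_pos hM
  have hM0' : (M : ℝ) ≠ 0 := ne_of_gt hM0
  have hMC0 : (M : ℂ) ≠ 0 := by exact_mod_cast hM0'
  set c : ℝ := 1 - 1 / M with hc_def
  have hdivle : 1 / M ≤ 1 := by
    rw [div_le_one hM0]; exact hM
  have hdiv0 : 0 ≤ 1 / M := by positivity
  have hc0 : 0 ≤ c := by rw [hc_def]; linarith
  have hc1 : c ≤ 1 := by rw [hc_def]; linarith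
  set n : ℕ := Fintype.card A with hn_def
  have hn0 : 0 < n := Fintype.card_pos
  have hnR : ((n : ℝ)) ≠ 0 := by positivity
  set t : ℝ := (n : ℝ)⁻¹ with ht_def
  have ht0 : 0 ≤ t := by positivity
  have hnC : ((n : ℕ) : ℂ) ≠ 0 := by exact_mod_cast hnR
  have htn : (t : ℂ) * (n : ℂ) = 1 := by
    rw [ht_def]
    push_cast
    field_simp
  -- The NS feasible set
  set S : Set ℝ := {x | ∃ ρ : Matrix A A ℂ, ∃ Λ : Matrix (A × B) (A × B) ℂ,
    IsState ρ ∧ Λ.PosSemidef ∧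
    ((M : ℂ) • (ρ ⊗ₖ (1 : Matrix B B ℂ)) - Λ).PosSemidef ∧
    trFst Λ = 1 ∧ x = (1 / M) * (Λ * J).trace.re} with hS_def
  -- Every NS-feasible value is at most 1
  have hub : ∀ y ∈ S, y ≤ 1 := by
    rintro y ⟨ρ, Λ, hρ, hΛ, hsub, htr, rfl⟩
    have h1 : 0 ≤ (((M : ℂ) • (ρ ⊗ₖ (1 : Matrix B B ℂ)) - Λ) * J).trace :=
      trace_mul_psd_nonneg hsub hJ.1
    have h2 : (((M : ℂ) • (ρ ⊗ₖ (1 : Matrix B B ℂ))) * J).trace = (M : ℂ) := by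
      rw [Matrix.smul_mul, Matrix.trace_smul, kron_one_mul_trace ρ hJ.2, hρ.2]
      simp
    rw [Matrix.sub_mul, Matrix.trace_sub, h2] at h1
    have h3 : (Λ * J).trace.re ≤ M := by
      have := re_nonneg_of_nonneg h1
      simp only [Complex.sub_re, Complex.ofReal_re] at this
      linarith
    calc (1 / M) * (Λ * J).trace.re ≤ (1 / M) * M := by
          apply mul_le_mul_of_nonneg_left h3 (by positivity)
      _ = 1 := by field_simp
  have hbdd : BddAbove S := ⟨1, hub⟩
  -- A base feasible point with nonnegative value
  have hbase : (1 / M) * (((t : ℂ) • (1 : Matrix (A × B) (A × B) ℂ)) * J).trace.re ∈ S := by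
    refine ⟨(t : ℂ) • (1 : Matrix A A ℂ), (t : ℂ) • (1 : Matrix (A × B) (A × B) ℂ), ?_, ?_, ?_, ?_, rfl⟩
    · refine ⟨smul_psd Matrix.PosSemidef.one ht0, ?_⟩
      rw [Matrix.trace_smul, Matrix.trace_one]
      simpa using htn
    · exact smul_psd Matrix.PosSemidef.one ht0
    · have key : (M : ℂ) • (((t : ℂ) • (1 : Matrix A A ℂ)) ⊗ₖ (1 : Matrix B B ℂ))
          - (t : ℂ) • (1 : Matrix (A × B) (A × B) ℂ)
          = ((M * t - t : ℝ) : ℂ) • (1 : Matrix (A × B) (A × B) ℂ) := by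
        rw [Matrix.smul_kronecker, Matrix.one_kronecker_one]
        push_cast
        module
      rw [key]
      exact smul_psd Matrix.PosSemidef.one (by nlinarith)
    · rw [trFst_smul]
      have h1 : (1 : Matrix (A × B) (A × B) ℂ) = (1 : Matrix A A ℂ) ⊗ₖ (1 : Matrix B B ℂ) :=
        Matrix.one_kronecker_one.symm
      rw [h1, trFst_one_kron, smul_smul, ← hn_def, htn, one_smul]
  have hbase_nonneg : 0 ≤ (1 / M) * (((t : ℂ) • (1 : Matrix (A × B) (A × B) ℂ)) * J).trace.re := by
    apply mul_nonneg (by positivity)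
    apply re_nonneg_of_nonneg
    rw [Matrix.smul_mul, Matrix.one_mul, Matrix.trace_smul]
    have : (0 : ℂ) ≤ J.trace := by
      have := psd_trace_nonneg hJ.1
      simpa using this
    rw [smul_eq_mul]
    exact mul_nonneg (Complex.zero_le_real.mpr ht0) this
  have hNS_nonneg : 0 ≤ sucNS J M := le_trans hbase_nonneg (le_csSup hbdd hbase)
  -- Main step: every MC-feasible value x gives c * x ≤ sucNS J M
  have hmain : ∀ x, (∃ ρ : Matrix A A ℂ, ∃ Λ : Matrix (A × B) (A × B) ℂ,
      IsState ρ ∧ Λ.PosSemidef ∧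
      ((M : ℂ) • (ρ ⊗ₖ (1 : Matrix B B ℂ)) - Λ).PosSemidef ∧
      ((1 : Matrix B B ℂ) - trFst Λ).PosSemidef ∧
      x = (1 / M) * (Λ * J).trace.re) → c * x ≤ sucNS J M := by
    rintro x ⟨ρ, Λ, hρ, hΛ, hsub, hle, rfl⟩
    set T : Matrix B B ℂ := trFst Λ with hT_def
    have hT : T.PosSemidef := trFst_psd hΛ
    set D : Matrix B B ℂ := ((1 - c : ℝ) : ℂ) • (1 : Matrix B B ℂ)
        + ((c : ℝ) : ℂ) • ((1 : Matrix B B ℂ) - T) with hD_def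
    have hD : D.PosSemidef :=
      (smul_psd Matrix.PosSemidef.one (by linarith)).add (smul_psd hle hc0)
    set Λ' : Matrix (A × B) (A × B) ℂ :=
      (c : ℂ) • Λ + (t : ℂ) • ((1 : Matrix A A ℂ) ⊗ₖ D) with hΛ'_def
    set ρ' : Matrix A A ℂ := (c : ℂ) • ρ + ((t / M : ℝ) : ℂ) • (1 : Matrix A A ℂ) with hρ'_def
    have hΛ'psd : Λ'.PosSemidef :=
      (smul_psd hΛ hc0).add (smul_psd (one_kron_psd hD) ht0)
    have hρ'state : IsState ρ' := by
      refine ⟨(smul_psd hρ.1 hc0).add (smul_psd Matrix.PosSemidef.one (by positivity)), ?_⟩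
      rw [hρ'_def, Matrix.trace_add, Matrix.trace_smul, Matrix.trace_smul, hρ.2,
        Matrix.trace_one, ← hn_def]
      rw [smul_eq_mul, smul_eq_mul]
      have hreal : c * 1 + (t / M) * (n : ℝ) = 1 := by
        rw [hc_def, ht_def]
        field_simp
        ring
      exact_mod_cast hreal
    have hUV : (1 : Matrix A A ℂ) ⊗ₖ ((1 : Matrix B B ℂ) - T)
        + (1 : Matrix A A ℂ) ⊗ₖ T = (1 : Matrix (A × B) (A × B) ℂ) := by
      rw [← Matrix.kronecker_add, sub_add_cancel, Matrix.one_kronecker_one]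
    have hconstr : ((M : ℂ) • (ρ' ⊗ₖ (1 : Matrix B B ℂ)) - Λ').PosSemidef := by
      have key : (M : ℂ) • (ρ' ⊗ₖ (1 : Matrix B B ℂ)) - Λ'
          = (c : ℂ) • ((M : ℂ) • (ρ ⊗ₖ (1 : Matrix B B ℂ)) - Λ)
            + ((c * t : ℝ) : ℂ) • ((1 : Matrix A A ℂ) ⊗ₖ T) := by
        ext ⟨a, b⟩ ⟨a', b'⟩
        simp only [hρ'_def, hΛ'_def, hD_def, Matrix.sub_apply, Matrix.add_apply,
          Matrix.smul_apply, Matrix.kroneckerMap_apply, Matrix.one_apply, smul_eq_mul, hc_def]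
        push_cast
        by_cases hab : a = a' <;> by_cases hbb : b = b' <;>
          simp only [hab, hbb, if_true, if_false, if_neg, mul_one, mul_zero, one_mul,
            zero_mul, sub_zero, zero_sub, add_zero, zero_add]
        all_goals try field_simp
        all_goals try ring
      rw [key]
      exact (smul_psd hsub hc0).add (smul_psd (one_kron_psd hT) (by positivity))
    have htrΛ' : trFst Λ' = 1 := by
      rw [hΛ'_def, trFst_add, trFst_smul, trFst_smul, trFst_one_kron, smul_smul, ← hn_def,
        htn, one_smul, ← hT_def, hD_def]
      push_cast
      module
    -- the value of the new point
    have hmem : (1 / M) * (Λ' * J).trace.re ∈ S :=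
      ⟨ρ', Λ', hρ'state, hΛ'psd, hconstr, htrΛ', rfl⟩
    have hval : c * ((1 / M) * (Λ * J).trace.re) ≤ (1 / M) * (Λ' * J).trace.re := by
      have hexp : (Λ' * J).trace
          = (c : ℂ) * (Λ * J).trace + (t : ℂ) * (((1 : Matrix A A ℂ) ⊗ₖ D) * J).trace := by
        rw [hΛ'_def, Matrix.add_mul, Matrix.trace_add, Matrix.smul_mul, Matrix.trace_smul,
          Matrix.smul_mul, Matrix.trace_smul, smul_eq_mul, smul_eq_mul]
      have hpos : 0 ≤ (((1 : Matrix A A ℂ) ⊗ₖ D) * J).trace.re :=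
        re_nonneg_of_nonneg (trace_mul_psd_nonneg (one_kron_psd hD) hJ.1)
      have hre : (Λ' * J).trace.re
          = c * (Λ * J).trace.re + t * (((1 : Matrix A A ℂ) ⊗ₖ D) * J).trace.re := by
        rw [hexp, Complex.add_re, Complex.re_ofReal_mul, Complex.re_ofReal_mul]
      rw [hre]
      have : c * (Λ * J).trace.re ≤ c * (Λ * J).trace.re
          + t * (((1 : Matrix A A ℂ) ⊗ₖ D) * J).trace.re := by nlinarith
      calc c * ((1 / M) * (Λ * J).trace.re) = (1 / M) * (c * (Λ * J).trace.re) := by ring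
        _ ≤ (1 / M) * (c * (Λ * J).trace.re
            + t * (((1 : Matrix A A ℂ) ⊗ₖ D) * J).trace.re) := by
          apply mul_le_mul_of_nonneg_left this (by positivity)
    exact le_trans hval (le_csSup hbdd hmem)
  -- Conclude
  rcases eq_or_lt_of_le hc0 with h | h
  · rw [show (1 - 1 / M) * sucMC J M = c * sucMC J M from rfl, ← h, zero_mul]
    exact hNS_nonneg
  · have hMCle : sucMC J M ≤ sucNS J M / c := by
      apply Real.sSup_le
      · intro x hx
        rw [le_div_iff₀ h, mul_comm]
        exact hmain x hx
      · positivity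
    calc (1 - 1 / M) * sucMC J M = c * sucMC J M := rfl
      _ ≤ c * (sucNS J M / c) := by
          apply mul_le_mul_of_nonneg_left hMCle hc0
      _ = sucNS J M := by field_simp


end QCoding
end

section
/- Let J be the Choi matrix of a quantum channel from a finite-dimensional system A to a finite-dimensional system B, let M ≥ 1 be a real number, let ρ be a quantum state on R ≅ A (positive semidefinite with trace 1), and let Λ be a matrix on R × B with 0 ≼ Λ ≼ ρ ⊗ I_B and Tr_R Λ = (1/M)·I_B. Define O := (ρ^{−1/2} ⊗ I_B)·Λ·(ρ^{−1/2} ⊗ I_B), where ρ^{−1/2} is the Moore–Penrose pseudo-inverse of the positive semidefinite square root of ρ. Then: (i) 0 ≼ O ≼ I_{R×B}; (ii) Tr[O · (ρ^{1/2} ⊗ I_B)·J·(ρ^{1/2} ⊗ I_B)] = Tr[Λ·J]; and (iii) for every quantum state σ on B, Tr[O · (ρ ⊗ σ)] = 1/M. -/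
open Matrix Kronecker Filter ComplexOrder

namespace QCoding

section Helpers

set_option linter.unusedSectionVars false

variable {n : Type*} [Fintype n] [DecidableEq n] {H : Matrix n n ℂ} {f g : ℝ → ℝ}

lemma hermApply_of (h : H.IsHermitian) (f : ℝ → ℝ) :
    hermApply H f = (h.eigenvectorUnitary : Matrix n n ℂ) *
      Matrix.diagonal (fun i => (f (h.eigenvalues i) : ℂ)) *
      (star (h.eigenvectorUnitary : Matrix n n ℂ)) := dif_pos h

lemma star_mul_self_eigen (h : H.IsHermitian) :
    (star (h.eigenvectorUnitary : Matrix n n ℂ)) * (h.eigenvectorUnitary : Matrix n n ℂ) = 1 := by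
  have := h.eigenvectorUnitary.2
  rw [Matrix.mem_unitaryGroup_iff'] at this
  exact this

lemma mul_star_self_eigen (h : H.IsHermitian) :
    (h.eigenvectorUnitary : Matrix n n ℂ) * (star (h.eigenvectorUnitary : Matrix n n ℂ)) = 1 := by
  have := h.eigenvectorUnitary.2
  rw [Matrix.mem_unitaryGroup_iff] at this
  exact this

lemma hermApply_mul (h : H.IsHermitian) (f g : ℝ → ℝ) :
    hermApply H f * hermApply H g = hermApply H (fun x => f x * g x) := by
  rw [hermApply_of h, hermApply_of h, hermApply_of h]
  set U := (h.eigenvectorUnitary : Matrix n n ℂ)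
  calc U * Matrix.diagonal (fun i => (f (h.eigenvalues i) : ℂ)) * star U *
        (U * Matrix.diagonal (fun i => (g (h.eigenvalues i) : ℂ)) * star U)
      = U * (Matrix.diagonal (fun i => (f (h.eigenvalues i) : ℂ)) * ((star U * U) *
          Matrix.diagonal (fun i => (g (h.eigenvalues i) : ℂ)))) * star U := by
        simp only [mul_assoc]
    _ = U * Matrix.diagonal (fun i => ((f (h.eigenvalues i) * g (h.eigenvalues i) : ℝ) : ℂ)) *
          star U := by
        rw [star_mul_self_eigen h, one_mul, Matrix.diagonal_mul_diagonal]
        simp only [mul_assoc]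
        norm_cast

lemma hermApply_id (h : H.IsHermitian) : hermApply H (fun x => x) = H := by
  rw [hermApply_of h]
  exact h.spectral_theorem.symm

lemma hermApply_one (h : H.IsHermitian) : hermApply H (fun _ => 1) = 1 := by
  rw [hermApply_of h]
  simp [mul_star_self_eigen h]

lemma hermApply_congr (h : H.IsHermitian) (hfg : ∀ i, f (h.eigenvalues i) = g (h.eigenvalues i)) :
    hermApply H f = hermApply H g := by
  rw [hermApply_of h, hermApply_of h]
  simp only [hfg]

lemma hermApply_sub (h : H.IsHermitian) (f g : ℝ → ℝ) :
    hermApply H (fun x => f x - g x) = hermApply H f - hermApply H g := by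
  rw [hermApply_of h, hermApply_of h, hermApply_of h, ← Matrix.sub_mul, ← Matrix.mul_sub,
    Matrix.diagonal_sub]
  push_cast
  rfl

lemma hermApply_isHermitian (h : H.IsHermitian) (f : ℝ → ℝ) : (hermApply H f).IsHermitian := by
  rw [hermApply_of h, Matrix.star_eq_conjTranspose]
  apply Matrix.isHermitian_mul_mul_conjTranspose
  rw [Matrix.IsHermitian, Matrix.diagonal_conjTranspose]
  simp [Pi.star_def, Complex.conj_ofReal]

lemma hermApply_posSemidef (h : H.IsHermitian) (hf : ∀ i, 0 ≤ f (h.eigenvalues i)) :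
    (hermApply H f).PosSemidef := by
  rw [hermApply_of h, Matrix.star_eq_conjTranspose]
  exact (Matrix.posSemidef_diagonal_iff.mpr (by
    intro i; exact_mod_cast hf i)).mul_mul_conjTranspose_same _

lemma kron_conjTranspose {m : Type*} (A : Matrix n n ℂ) (B : Matrix m m ℂ) :
    (A ⊗ₖ B)ᴴ = Aᴴ ⊗ₖ Bᴴ := by
  ext ⟨a, b⟩ ⟨c, d⟩
  simp [Matrix.conjTranspose_apply, mul_comm]

lemma kron_one_posSemidef {m : Type*} [Fintype m] [DecidableEq m]
    {A : Matrix n n ℂ} (hA : A.PosSemidef) : (A ⊗ₖ (1 : Matrix m m ℂ)).PosSemidef := by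
  exact hA.kronecker Matrix.PosSemidef.one


lemma sub_kron {m : Type*} (A B : Matrix n n ℂ) (C : Matrix m m ℂ) :
    (A - B) ⊗ₖ C = A ⊗ₖ C - B ⊗ₖ C := by
  ext ⟨a, b⟩ ⟨c, d⟩
  simp [Matrix.kroneckerMap_apply, sub_mul]

lemma scalar_pi {x : ℝ} (hx : 0 ≤ x) :
    x ^ (-(1/2) : ℝ) * x ^ ((1/2) : ℝ) = if x = 0 then 0 else 1 := by
  rcases eq_or_lt_of_le hx with h | h
  · simp [← h, Real.zero_rpow]
  · rw [if_neg (ne_of_gt h), ← Real.rpow_add h]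
    norm_num

lemma scalar_fxf {x : ℝ} (hx : 0 ≤ x) :
    x ^ (-(1/2) : ℝ) * x * x ^ (-(1/2) : ℝ) = x ^ (-(1/2) : ℝ) * x ^ ((1/2) : ℝ) := by
  rcases eq_or_lt_of_le hx with h | h
  · simp [← h, Real.zero_rpow]
  · have h3 : x ^ ((1/2) : ℝ) * x ^ ((1/2) : ℝ) = x := by
      rw [← Real.rpow_add h]; norm_num
    have h2 : x ^ (-(1/2) : ℝ) * x ^ ((1/2) : ℝ) = 1 := by
      rw [← Real.rpow_add h]; norm_num
    set a := x ^ (-(1/2) : ℝ) with ha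
    set b := x ^ ((1/2) : ℝ) with hb
    calc a * x * a = (a * b) * (b * a) := by rw [← h3]; ring
      _ = b * a := by rw [h2, one_mul]
      _ = a * b := mul_comm b a

lemma scalar_pix {x : ℝ} (hx : 0 ≤ x) :
    (x ^ (-(1/2) : ℝ) * x ^ ((1/2) : ℝ)) * x = x := by
  rw [scalar_pi hx]
  rcases eq_or_ne x 0 with h | h <;> simp [h]

lemma scalar_pi_nonneg {x : ℝ} (hx : 0 ≤ x) :
    0 ≤ x ^ (-(1/2) : ℝ) * x ^ ((1/2) : ℝ) := by
  rw [scalar_pi hx]; split <;> norm_num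

lemma scalar_pi_le_one {x : ℝ} (hx : 0 ≤ x) :
    0 ≤ 1 - x ^ (-(1/2) : ℝ) * x ^ ((1/2) : ℝ) := by
  rw [scalar_pi hx]; split <;> norm_num


end Helpers

/-- Properties of the observable
`O = (ρ^{−1/2} ⊗ I_B) Λ (ρ^{−1/2} ⊗ I_B)` obtained from a feasible point `(ρ, Λ)` of
the fixed-input non-signaling program. -/
theorem ns_observable_props {A B : Type*} [Fintype A] [DecidableEq A] [Nonempty A]
    [Fintype B] [DecidableEq B]
    (J : Matrix (A × B) (A × B) ℂ) (hJ : IsChoi J)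
    (M : ℝ) (hM : 1 ≤ M)
    (ρ : Matrix A A ℂ) (hρ : IsState ρ)
    (Λ : Matrix (A × B) (A × B) ℂ) (hΛpos : Λ.PosSemidef)
    (hΛle : ((ρ ⊗ₖ (1 : Matrix B B ℂ)) - Λ).PosSemidef)
    (hΛtr : trFst Λ = ((1 / M : ℂ)) • (1 : Matrix B B ℂ))
    (O : Matrix (A × B) (A × B) ℂ)
    (hO : O = (matRPow ρ (-(1/2)) ⊗ₖ (1 : Matrix B B ℂ)) * Λ *
      (matRPow ρ (-(1/2)) ⊗ₖ (1 : Matrix B B ℂ))) :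
    O.PosSemidef ∧
    ((1 : Matrix (A × B) (A × B) ℂ) - O).PosSemidef ∧
    (O * ((matRPow ρ (1/2) ⊗ₖ (1 : Matrix B B ℂ)) * J *
      (matRPow ρ (1/2) ⊗ₖ (1 : Matrix B B ℂ)))).trace = (Λ * J).trace ∧
    ∀ σ : Matrix B B ℂ, IsState σ → (O * (ρ ⊗ₖ σ)).trace = ((1 / M : ℂ)) := by
  have hρh : ρ.IsHermitian := hρ.1.1
  have hev : ∀ i, 0 ≤ hρh.eigenvalues i := fun i => hρ.1.eigenvalues_nonneg i
  set f : ℝ → ℝ := fun x => x ^ (-(1/2) : ℝ) with hf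
  set s : ℝ → ℝ := fun x => x ^ ((1/2) : ℝ) with hs
  set X : Matrix A A ℂ := hermApply ρ f with hX
  set S : Matrix A A ℂ := hermApply ρ s with hS
  set P : Matrix A A ℂ := hermApply ρ (fun x => f x * s x) with hP
  have hmrX : matRPow ρ (-(1/2)) = X := rfl
  have hmrS : matRPow ρ (1/2) = S := rfl
  have hid : hermApply ρ (fun x => x) = ρ := hermApply_id hρh
  have hXS : X * S = P := hermApply_mul hρh f s
  have hSX : S * X = P :=
    (hermApply_mul hρh s f).trans (hermApply_congr hρh fun i => mul_comm _ _)
  have hXρX : X * ρ * X = P := by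
    calc X * ρ * X = X * hermApply ρ (fun x => x) * X := by rw [hid]
      _ = hermApply ρ (fun x => f x * x * f x) := by rw [hermApply_mul hρh, hermApply_mul hρh]
      _ = P := hermApply_congr hρh fun i => scalar_fxf (hev i)
  have hPρ : P * ρ = ρ := by
    calc P * ρ = P * hermApply ρ (fun x => x) := by rw [hid]
      _ = hermApply ρ (fun x => (f x * s x) * x) := by rw [hermApply_mul hρh]
      _ = hermApply ρ (fun x => x) := hermApply_congr hρh fun i => scalar_pix (hev i)
      _ = ρ := hid
  have hXherm : Xᴴ = X := hermApply_isHermitian hρh f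
  have hPherm : Pᴴ = P := hermApply_isHermitian hρh _
  have h1Ppos : ((1 : Matrix A A ℂ) - P).PosSemidef := by
    have : (1 : Matrix A A ℂ) - P = hermApply ρ (fun x => 1 - f x * s x) := by
      rw [hermApply_sub hρh, hermApply_one hρh]
    rw [this]
    exact hermApply_posSemidef hρh fun i => scalar_pi_le_one (hev i)
  set XK : Matrix (A × B) (A × B) ℂ := X ⊗ₖ (1 : Matrix B B ℂ) with hXK
  set SK : Matrix (A × B) (A × B) ℂ := S ⊗ₖ (1 : Matrix B B ℂ) with hSK
  set PK : Matrix (A × B) (A × B) ℂ := P ⊗ₖ (1 : Matrix B B ℂ) with hPK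
  have hXKherm : XKᴴ = XK := by rw [hXK, kron_conjTranspose, hXherm, Matrix.conjTranspose_one]
  have hPKherm : PKᴴ = PK := by rw [hPK, kron_conjTranspose, hPherm, Matrix.conjTranspose_one]
  have hXKρK : XK * (ρ ⊗ₖ (1 : Matrix B B ℂ)) * XK = PK := by
    rw [hXK, hPK, ← Matrix.mul_kronecker_mul, ← Matrix.mul_kronecker_mul, hXρX, one_mul, one_mul]
  have hSKXK : SK * XK = PK := by
    rw [hSK, hXK, hPK, ← Matrix.mul_kronecker_mul, hSX, one_mul]
  have hXKSK : XK * SK = PK := by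
    rw [hSK, hXK, hPK, ← Matrix.mul_kronecker_mul, hXS, one_mul]
  set Q : Matrix (A × B) (A × B) ℂ := (1 : Matrix (A × B) (A × B) ℂ) - PK with hQdef
  have hQ_eq : Q = ((1 : Matrix A A ℂ) - P) ⊗ₖ (1 : Matrix B B ℂ) := by
    rw [hQdef, sub_kron, hPK, Matrix.one_kronecker_one]
  have hQherm : Qᴴ = Q := by
    rw [hQdef, Matrix.conjTranspose_sub, Matrix.conjTranspose_one, hPKherm]
  clear_value X S P XK SK PK Q
  have hQρQ : Q * (ρ ⊗ₖ (1 : Matrix B B ℂ)) * Q = 0 := by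
    rw [hQ_eq, ← Matrix.mul_kronecker_mul, ← Matrix.mul_kronecker_mul]
    have h1 : ((1 : Matrix A A ℂ) - P) * ρ = 0 := by
      rw [Matrix.sub_mul, Matrix.one_mul, hPρ, sub_self]
    rw [h1, Matrix.zero_mul, Matrix.zero_kronecker]
  have hdot : ∀ (Mm : Matrix (A × B) (A × B) ℂ) (v : A × B → ℂ),
      star (Q *ᵥ v) ⬝ᵥ Mm *ᵥ (Q *ᵥ v) = star v ⬝ᵥ (Q * Mm * Q) *ᵥ v := by
    intro Mm v
    rw [Matrix.star_mulVec, hQherm, Matrix.mulVec_mulVec, Matrix.dotProduct_mulVec,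
      Matrix.vecMul_vecMul, ← Matrix.dotProduct_mulVec, Matrix.mul_assoc]
  have hΛQ : Λ * Q = 0 := by
    have key : ∀ v, Λ *ᵥ (Q *ᵥ v) = 0 := by
      intro v
      have hzero : star (Q *ᵥ v) ⬝ᵥ Λ *ᵥ (Q *ᵥ v) = 0 := by
        have hge := hΛpos.dotProduct_mulVec_nonneg (Q *ᵥ v)
        have hle' := hΛle.dotProduct_mulVec_nonneg (Q *ᵥ v)
        have em : Q * ((ρ ⊗ₖ (1 : Matrix B B ℂ)) - Λ) * Q = - (Q * Λ * Q) := by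
          rw [Matrix.mul_sub, Matrix.sub_mul, hQρQ, zero_sub]
        rw [hdot, em, Matrix.neg_mulVec, dotProduct_neg, ← hdot] at hle'
        have : star (Q *ᵥ v) ⬝ᵥ Λ *ᵥ (Q *ᵥ v) ≤ 0 := by
          rwa [← neg_nonneg]
        exact le_antisymm this hge
      exact (hΛpos.dotProduct_mulVec_zero_iff _).mp hzero
    apply Matrix.ext
    intro i j
    have h0 : (Λ * Q) *ᵥ Pi.single j 1 = 0 := by
      rw [← Matrix.mulVec_mulVec, key (Pi.single j 1)]
    have := congrFun h0 i
    simpa [Matrix.mulVec_single] using this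
  have hQΛ : Q * Λ = 0 := by
    have := congrArg Matrix.conjTranspose hΛQ
    rwa [Matrix.conjTranspose_mul, hQherm, hΛpos.1.eq, Matrix.conjTranspose_zero] at this
  have hΛPK : Λ * PK = Λ := by
    have : PK = 1 - Q := by rw [hQdef]; abel
    rw [this, Matrix.mul_sub, Matrix.mul_one, hΛQ, sub_zero]
  have hPKΛ : PK * Λ = Λ := by
    have : PK = 1 - Q := by rw [hQdef]; abel
    rw [this, Matrix.sub_mul, Matrix.one_mul, hQΛ, sub_zero]
  rw [hmrX, ← hXK] at hO
  have hOpos : O.PosSemidef := by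
    have h1 := hΛpos.conjTranspose_mul_mul_same XK
    rwa [hXKherm, ← hO] at h1
  refine ⟨hOpos, ?_, ?_, ?_⟩
  · -- 1 - O PSD
    have keyeq : (1 : Matrix (A × B) (A × B) ℂ) - O =
        (((1 : Matrix A A ℂ) - P) ⊗ₖ (1 : Matrix B B ℂ)) +
          (XK * ((ρ ⊗ₖ (1 : Matrix B B ℂ)) - Λ) * XK) := by
      rw [hO, ← hQ_eq, hQdef, Matrix.mul_sub, Matrix.sub_mul, hXKρK]
      abel
    rw [keyeq]
    have h2 := hΛle.conjTranspose_mul_mul_same XK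
    rw [hXKherm] at h2
    exact Matrix.PosSemidef.add (kron_one_posSemidef h1Ppos) h2
  · -- trace identity
    rw [hmrS, ← hSK, hO]
    have hSOS : SK * (XK * Λ * XK) * SK = Λ := by
      calc SK * (XK * Λ * XK) * SK = (SK * XK) * Λ * (XK * SK) := by
            simp only [Matrix.mul_assoc]
        _ = Λ := by rw [hSKXK, hXKSK, hPKΛ, hΛPK]
    calc (XK * Λ * XK * (SK * J * SK)).trace
        = ((XK * Λ * XK * (SK * J)) * SK).trace := by simp only [Matrix.mul_assoc]
      _ = (SK * (XK * Λ * XK * (SK * J))).trace := by rw [Matrix.trace_mul_comm]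
      _ = ((SK * (XK * Λ * XK) * SK) * J).trace := by simp only [Matrix.mul_assoc]
      _ = (Λ * J).trace := by rw [hSOS]
  · -- σ part
    intro σ hσ
    rw [hO]
    have hXKρσ : XK * (ρ ⊗ₖ σ) * XK = P ⊗ₖ σ := by
      rw [hXK, ← Matrix.mul_kronecker_mul, ← Matrix.mul_kronecker_mul, hXρX,
        one_mul, mul_one]
    have hPσ : PK * ((1 : Matrix A A ℂ) ⊗ₖ σ) = P ⊗ₖ σ := by
      rw [hPK, ← Matrix.mul_kronecker_mul, mul_one, one_mul]
    have htr1 : (XK * Λ * XK * (ρ ⊗ₖ σ)).trace = (Λ * ((1 : Matrix A A ℂ) ⊗ₖ σ)).trace := by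
      calc (XK * Λ * XK * (ρ ⊗ₖ σ)).trace
          = ((XK * Λ) * (XK * (ρ ⊗ₖ σ))).trace := by simp only [Matrix.mul_assoc]
        _ = ((XK * (ρ ⊗ₖ σ)) * (XK * Λ)).trace := by rw [Matrix.trace_mul_comm]
        _ = ((XK * (ρ ⊗ₖ σ) * XK) * Λ).trace := by simp only [Matrix.mul_assoc]
        _ = ((P ⊗ₖ σ) * Λ).trace := by rw [hXKρσ]
        _ = (Λ * (P ⊗ₖ σ)).trace := by rw [Matrix.trace_mul_comm]
        _ = (Λ * (PK * ((1 : Matrix A A ℂ) ⊗ₖ σ))).trace := by rw [hPσ]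
        _ = ((Λ * PK) * ((1 : Matrix A A ℂ) ⊗ₖ σ)).trace := by simp only [Matrix.mul_assoc]
        _ = (Λ * ((1 : Matrix A A ℂ) ⊗ₖ σ)).trace := by rw [hΛPK]
    rw [htr1]
    have htr2 : (Λ * ((1 : Matrix A A ℂ) ⊗ₖ σ)).trace = (trFst Λ * σ).trace := by
      have lhs : (Λ * ((1 : Matrix A A ℂ) ⊗ₖ σ)).trace
          = ∑ a : A, ∑ b : B, ∑ b' : B, Λ (a, b) (a, b') * σ b' b := by
        simp only [Matrix.trace, Matrix.diag, Matrix.mul_apply, Fintype.sum_prod_type,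
          Matrix.kroneckerMap_apply, Matrix.one_apply, mul_ite, mul_zero, mul_one]
        refine Finset.sum_congr rfl fun a _ => Finset.sum_congr rfl fun b _ => ?_
        rw [Finset.sum_comm]
        simp
      have rhs : (trFst Λ * σ).trace
          = ∑ b : B, ∑ b' : B, (∑ a : A, Λ (a, b) (a, b')) * σ b' b := by
        simp [Matrix.trace, Matrix.diag, Matrix.mul_apply, trFst]
      rw [lhs, rhs, Finset.sum_comm]
      refine Finset.sum_congr rfl fun b _ => ?_
      rw [Finset.sum_comm]
      exact Finset.sum_congr rfl fun b' _ => (Finset.sum_mul _ _ _).symm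
    rw [htr2, hΛtr, Matrix.smul_mul, Matrix.one_mul, Matrix.trace_smul, hσ.2, smul_eq_mul,
      mul_one]


end QCoding
end

section
/- Let J be the Choi matrix of a quantum channel from a finite-dimensional system A to a finite-dimensional system B, let n ≥ 1 be an integer, and let M ≥ 1 be a real number. Then the non-signaling success probability suc^NS(J^{(n)}, M) of the n-fold tensor power channel equals the supremum of the same semidefinite program restricted to permutation-invariant states ρ on R^n, i.e. to states ρ on-(Fin n → A) satisfying ρ(f∘π, g∘π) = ρ(f, g) for all permutations π of Fin n and all f, g : Fin n → A. -/
open Matrix Kronecker Filter ComplexOrder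

namespace QCoding

section Aux

/-- Precomposition with a permutation, as an equivalence of function types. -/
private def permEquiv {X : Type*} {n : ℕ} (π : Equiv.Perm (Fin n)) :
    (Fin n → X) ≃ (Fin n → X) where
  toFun f := f ∘ π
  invFun f := f ∘ π.symm
  left_inv f := by funext x; simp
  right_inv f := by funext x; simp

/-- Simultaneous precomposition on a product of function types. -/
private def permEquivProd {X Y : Type*} {n : ℕ} (π : Equiv.Perm (Fin n)) :
    ((Fin n → X) × (Fin n → Y)) ≃ ((Fin n → X) × (Fin n → Y)) where
  toFun p := (p.1 ∘ π, p.2 ∘ π)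
  invFun p := (p.1 ∘ π.symm, p.2 ∘ π.symm)
  left_inv p := by
    obtain ⟨a, b⟩ := p
    simp only [Prod.mk.injEq]
    constructor <;> (funext x; simp)
  right_inv p := by
    obtain ⟨a, b⟩ := p
    simp only [Prod.mk.injEq]
    constructor <;> (funext x; simp)

private lemma psd_smul_real {m : Type*} [Fintype m] {M : Matrix m m ℂ}
    (hM : M.PosSemidef) {c : ℝ} (hc : 0 ≤ c) : ((c : ℂ) • M).PosSemidef := by
  refine ⟨?_, ?_⟩
  · have : star (c : ℂ) = (c : ℂ) := by simp [Complex.conj_ofReal]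
    rw [Matrix.IsHermitian, Matrix.conjTranspose_smul, this, hM.1.eq]
  · exact (hM.smul (Complex.zero_le_real.mpr hc)).2

private lemma psd_sum {m ι : Type*} [Fintype m] (s : Finset ι)
    (f : ι → Matrix m m ℂ) (h : ∀ i ∈ s, (f i).PosSemidef) :
    (∑ i ∈ s, f i).PosSemidef := by
  classical
  induction s using Finset.induction_on with
  | empty => simpa using Matrix.PosSemidef.zero
  | @insert a s ha ih =>
      rw [Finset.sum_insert ha]
      exact (h a (Finset.mem_insert_self a s)).add
        (ih fun i hi => h i (Finset.mem_insert_of_mem hi))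

private lemma trace_submatrix_equiv' {m m' : Type*} [Fintype m] [Fintype m']
    (M : Matrix m m ℂ) (e : m' ≃ m) : (M.submatrix e e).trace = M.trace := by
  simp only [Matrix.trace, Matrix.diag, Matrix.submatrix_apply]
  exact Equiv.sum_comp e (fun i => M i i)

private lemma sum_kron {ι m p : Type*} [Fintype p] (s : Finset ι)
    (f : ι → Matrix m m ℂ) (B : Matrix p p ℂ) :
    (∑ i ∈ s, f i) ⊗ₖ B = ∑ i ∈ s, (f i ⊗ₖ B) := by
  ext ⟨a, b⟩ ⟨c, d⟩
  simp [Matrix.kroneckerMap_apply, Matrix.sum_apply, Finset.sum_mul]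

private lemma comp_perm_inj {X : Type*} {n : ℕ} (π : Equiv.Perm (Fin n))
    {g g' : Fin n → X} (h : g ∘ π = g' ∘ π) : g = g' := by
  funext x
  have := congrFun h (π.symm x)
  simpa using this

/-- One-entry invariance of the identity under simultaneous permutation. -/
private lemma one_perm_apply {X : Type*} [DecidableEq X] {n : ℕ}
    (π : Equiv.Perm (Fin n)) (g g' : Fin n → X) :
    (1 : Matrix (Fin n → X) (Fin n → X) ℂ) (g ∘ π) (g' ∘ π)
      = (1 : Matrix (Fin n → X) (Fin n → X) ℂ) g g' := by
  by_cases h : g = g'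
  · subst h; simp
  · rw [Matrix.one_apply_ne h, Matrix.one_apply_ne]
    intro hc
    exact h (comp_perm_inj π hc)

/-- The Kronecker product with the identity commutes with permutation submatrices. -/
private lemma kron_one_submatrix {A B : Type*} [DecidableEq B] {n : ℕ}
    (π : Equiv.Perm (Fin n)) (ρ : Matrix (Fin n → A) (Fin n → A) ℂ) :
    (ρ.submatrix (permEquiv (X := A) π) (permEquiv (X := A) π)) ⊗ₖ
        (1 : Matrix (Fin n → B) (Fin n → B) ℂ)
      = (ρ ⊗ₖ (1 : Matrix (Fin n → B) (Fin n → B) ℂ)).submatrix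
          (permEquivProd (X := A) (Y := B) π) (permEquivProd (X := A) (Y := B) π) := by
  ext ⟨f, g⟩ ⟨f', g'⟩
  simp only [Matrix.kroneckerMap_apply, Matrix.submatrix_apply, permEquiv, permEquivProd,
    Equiv.coe_fn_mk]
  rw [one_perm_apply π g g']

/-- The Choi matrix of a tensor power is permutation invariant. -/
private lemma choiPow_perm {A B : Type*} (J : Matrix (A × B) (A × B) ℂ) {n : ℕ}
    (π : Equiv.Perm (Fin n)) :
    (choiPow J n).submatrix (permEquivProd (X := A) (Y := B) π)
        (permEquivProd (X := A) (Y := B) π) = choiPow J n := by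
  ext ⟨f, g⟩ ⟨f', g'⟩
  simp only [Matrix.submatrix_apply, permEquivProd, Equiv.coe_fn_mk, choiPow,
    Function.comp_apply]
  exact Equiv.prod_comp π (fun k => J (f k, g k) (f' k, g' k))

end Aux

/-- For the `n`-fold tensor power channel, the non-signaling success
probability can be computed restricting to permutation-invariant input states. -/
theorem sucNS_perm_invariant {A B : Type*} [Fintype A] [DecidableEq A] [Nonempty A]
    [Fintype B] [DecidableEq B]
    (J : Matrix (A × B) (A × B) ℂ) (hJ : IsChoi J)
    (n : ℕ) (hn : 1 ≤ n) (M : ℝ) (hM : 1 ≤ M) :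
    sucNS (choiPow J n) M =
    sSup {x | ∃ ρ : Matrix (Fin n → A) (Fin n → A) ℂ,
      ∃ Λ : Matrix ((Fin n → A) × (Fin n → B)) ((Fin n → A) × (Fin n → B)) ℂ,
      IsState ρ ∧
      (∀ π : Equiv.Perm (Fin n), ∀ f g : Fin n → A, ρ (f ∘ π) (g ∘ π) = ρ f g) ∧
      Λ.PosSemidef ∧
      ((M : ℂ) • (ρ ⊗ₖ (1 : Matrix (Fin n → B) (Fin n → B) ℂ)) - Λ).PosSemidef ∧
      trFst Λ = 1 ∧
      x = (1 / M) * (Λ * choiPow J n).trace.re} := by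
  classical
  unfold sucNS
  apply congrArg
  ext x
  constructor
  · rintro ⟨ρ, Λ, hρ, hΛ, hgap, htr, hx⟩
    set G := Equiv.Perm (Fin n) with hG
    set N : ℕ := Fintype.card G with hN
    have hNpos : 0 < N := Fintype.card_pos
    have hNne : ((N : ℕ) : ℂ) ≠ 0 := Nat.cast_ne_zero.mpr hNpos.ne'
    set c : ℝ := (N : ℝ)⁻¹ with hc
    have hc0 : 0 ≤ c := inv_nonneg.mpr (Nat.cast_nonneg N)
    have hcC : (c : ℂ) = ((N : ℕ) : ℂ)⁻¹ := by
      rw [hc]; push_cast; ring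
    have hcN : (c : ℂ) * ((N : ℕ) : ℂ) = 1 := by
      rw [hcC]; exact inv_mul_cancel₀ hNne
    set ρbar : Matrix (Fin n → A) (Fin n → A) ℂ :=
      (c : ℂ) • ∑ π : G, ρ.submatrix (permEquiv (X := A) π) (permEquiv (X := A) π)
      with hρbar
    set Λbar : Matrix ((Fin n → A) × (Fin n → B)) ((Fin n → A) × (Fin n → B)) ℂ :=
      (c : ℂ) • ∑ π : G, Λ.submatrix (permEquivProd (X := A) (Y := B) π)
        (permEquivProd (X := A) (Y := B) π) with hΛbar
    have hkron : ρbar ⊗ₖ (1 : Matrix (Fin n → B) (Fin n → B) ℂ)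
        = (c : ℂ) • ∑ π : G,
            (ρ ⊗ₖ (1 : Matrix (Fin n → B) (Fin n → B) ℂ)).submatrix
              (permEquivProd (X := A) (Y := B) π) (permEquivProd (X := A) (Y := B) π) := by
      rw [hρbar, Matrix.smul_kronecker, sum_kron]
      congr 1
      exact Finset.sum_congr rfl fun π _ => kron_one_submatrix π ρ
    refine ⟨ρbar, Λbar, ⟨?_, ?_⟩, ?_, ?_, ?_, ?_, ?_⟩
    · exact psd_smul_real
        (psd_sum _ _ (fun π _ => hρ.1.submatrix _)) hc0
    · rw [hρbar, Matrix.trace_smul, Matrix.trace_sum]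
      have h1 : ∀ π : G, (ρ.submatrix (permEquiv (X := A) π)
          (permEquiv (X := A) π)).trace = 1 := fun π => by
        rw [trace_submatrix_equiv' ρ (permEquiv π)]; exact hρ.2
      rw [Finset.sum_congr rfl (fun π _ => h1 π), Finset.sum_const, Finset.card_univ,
        nsmul_eq_mul, mul_one, smul_eq_mul, ← hN, hcN]
    · intro τ f g
      rw [hρbar]
      simp only [Matrix.smul_apply, Matrix.sum_apply, Matrix.submatrix_apply,
        permEquiv, Equiv.coe_fn_mk, smul_eq_mul]
      congr 1
      refine Fintype.sum_equiv (Equiv.mulLeft τ) _ _ (fun π => ?_)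
      simp only [Equiv.coe_mulLeft]
      congr 1 <;> (funext k; simp [Function.comp, Equiv.Perm.mul_apply])
    · exact psd_smul_real
        (psd_sum _ _ (fun π _ => hΛ.submatrix _)) hc0
    · have key : (M : ℂ) • (ρbar ⊗ₖ (1 : Matrix (Fin n → B) (Fin n → B) ℂ)) - Λbar
          = (c : ℂ) • ∑ π : G,
              ((M : ℂ) • (ρ ⊗ₖ (1 : Matrix (Fin n → B) (Fin n → B) ℂ)) - Λ).submatrix
                (permEquivProd (X := A) (Y := B) π)
                (permEquivProd (X := A) (Y := B) π) := by
        rw [hkron, hΛbar, smul_comm ((M : ℂ)) ((c : ℂ)), ← smul_sub]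
        congr 1
        rw [Finset.smul_sum, ← Finset.sum_sub_distrib]
        refine Finset.sum_congr rfl fun π _ => ?_
        simp [Matrix.submatrix_sub, Matrix.submatrix_smul]
      rw [key]
      exact psd_smul_real (psd_sum _ _ (fun π _ => hgap.submatrix _)) hc0
    · ext b b'
      show (∑ f : Fin n → A, Λbar (f, b) (f, b'))
          = (1 : Matrix (Fin n → B) (Fin n → B) ℂ) b b'
      rw [hΛbar]
      simp only [Matrix.smul_apply, Matrix.sum_apply, Matrix.submatrix_apply,
        permEquivProd, Equiv.coe_fn_mk, smul_eq_mul]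
      rw [← Finset.mul_sum, Finset.sum_comm]
      have inner : ∀ π : G,
          (∑ f : Fin n → A, Λ (f ∘ π, b ∘ π) (f ∘ π, b' ∘ π))
            = (1 : Matrix (Fin n → B) (Fin n → B) ℂ) b b' := by
        intro π
        have h1 := Equiv.sum_comp (permEquiv (X := A) π)
          (fun h => Λ (h, b ∘ ⇑π) (h, b' ∘ ⇑π))
        simp only [permEquiv, Equiv.coe_fn_mk] at h1
        rw [h1]
        have h2 : trFst Λ (b ∘ ⇑π) (b' ∘ ⇑π)
            = (1 : Matrix (Fin n → B) (Fin n → B) ℂ) (b ∘ ⇑π) (b' ∘ ⇑π) := by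
          rw [htr]
        have h3 : (∑ f : Fin n → A, Λ (f, b ∘ ⇑π) (f, b' ∘ ⇑π))
            = trFst Λ (b ∘ ⇑π) (b' ∘ ⇑π) := rfl
        rw [h3, h2, one_perm_apply]
      rw [Finset.sum_congr rfl (fun π _ => inner π), Finset.sum_const, Finset.card_univ,
        nsmul_eq_mul, ← hN, ← mul_assoc, hcN, one_mul]
    · have htrace : (Λbar * choiPow J n).trace = (Λ * choiPow J n).trace := by
        rw [hΛbar, Matrix.smul_mul, Matrix.trace_smul, Finset.sum_mul, Matrix.trace_sum]
        have each : ∀ π : G,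
            (Λ.submatrix (permEquivProd (X := A) (Y := B) π)
                (permEquivProd (X := A) (Y := B) π) * choiPow J n).trace
              = (Λ * choiPow J n).trace := by
          intro π
          conv_lhs => rw [← choiPow_perm J π]
          rw [Matrix.submatrix_mul_equiv, trace_submatrix_equiv']
        rw [Finset.sum_congr rfl (fun π _ => each π), Finset.sum_const,
          Finset.card_univ, nsmul_eq_mul, smul_eq_mul, ← hN, ← mul_assoc, hcN, one_mul]
      rw [hx, htrace]
  · rintro ⟨ρ, Λ, hρ, _, hΛ, hgap, htr, hx⟩
    exact ⟨ρ, Λ, hρ, hΛ, hgap, htr, hx⟩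

end QCoding
end
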